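/- Let A be a k-algebra and r = ∑ r¹ ⊗ r² ∈ A ⊗ A an element such that ∑ (r¹a) ⊗ r² = ∑ (a r¹) ⊗ r² for all a ∈ A (i.e. applying right-multiplication by a to the first tensor factor of r agrees with applying left-multiplication by a). If M is a left A-module, then the homothety ℛ : M ⊗ M → M ⊗ M, ℛ(m ⊗ n) = ∑ (r¹ · m) ⊗ (r² · n), is a solution of the Long equation. -/

import Mathlib

open TensorProduct

noncomputable section

variable {k M : Type*} [Field k] [AddCommGroup M] [Module k M]

/-- The flip map τ : M ⊗ M → M ⊗ M, τ(m ⊗ n) = n ⊗ m. -/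
def tau (k M : Type*) [Field k] [AddCommGroup M] [Module k M] :
    M ⊗[k] M →ₗ[k] M ⊗[k] M := (TensorProduct.comm k M M).toLinearMap

/-- R¹² = R ⊗ id on M ⊗ (M ⊗ M) (transported along the associator). -/
def R12 (R : M ⊗[k] M →ₗ[k] M ⊗[k] M) :
    M ⊗[k] (M ⊗[k] M) →ₗ[k] M ⊗[k] (M ⊗[k] M) :=
  (TensorProduct.assoc k M M M).toLinearMap ∘ₗ
    TensorProduct.map R LinearMap.id ∘ₗ (TensorProduct.assoc k M M M).symm.toLinearMap

/-- R²³ = id ⊗ R on M ⊗ (M ⊗ M). -/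
def R23 (R : M ⊗[k] M →ₗ[k] M ⊗[k] M) :
    M ⊗[k] (M ⊗[k] M) →ₗ[k] M ⊗[k] (M ⊗[k] M) :=
  TensorProduct.map LinearMap.id R

/-- R¹³ = (id ⊗ τ)(R ⊗ id)(id ⊗ τ) on M ⊗ (M ⊗ M). -/
def R13 (R : M ⊗[k] M →ₗ[k] M ⊗[k] M) :
    M ⊗[k] (M ⊗[k] M) →ₗ[k] M ⊗[k] (M ⊗[k] M) :=
  TensorProduct.map LinearMap.id (tau k M) ∘ₗ R12 R ∘ₗ
    TensorProduct.map LinearMap.id (tau k M)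

/-- R is a solution of the Long equation: R¹²R¹³ = R¹³R¹² and R¹²R²³ = R²³R¹². -/
def IsLongSolution (R : M ⊗[k] M →ₗ[k] M ⊗[k] M) : Prop :=
  R12 R ∘ₗ R13 R = R13 R ∘ₗ R12 R ∧ R12 R ∘ₗ R23 R = R23 R ∘ₗ R12 R

end

noncomputable section Aux

variable {k : Type*} [Field k] {A : Type*} [Ring A] [Algebra k A]
    {M : Type*} [AddCommGroup M] [Module k M] [Module A M]
    [IsScalarTower k A M] [SMulCommClass A k M]

/-- The A-action on M as a k-linear map. -/
def Lmap (k A M : Type*) [Field k] [Ring A] [Algebra k A] [AddCommGroup M]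
    [Module k M] [Module A M] [IsScalarTower k A M] [SMulCommClass A k M] :
    A →ₗ[k] M →ₗ[k] M :=
  ((Algebra.lsmul k k M : A →ₐ[k] Module.End k M)).toLinearMap

@[simp] lemma Lmap_apply (a : A) (m : M) : Lmap k A M a m = a • m := rfl

/-- The homothety associated to `r`. -/
def beta (r : A ⊗[k] A) : M ⊗[k] M →ₗ[k] M ⊗[k] M :=
  TensorProduct.homTensorHomMap (RingHom.id k) M M M M
    (TensorProduct.map (Lmap k A M) (Lmap k A M) r)

lemma beta_tmul (a b : A) (x : M ⊗[k] M) :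
    beta (a ⊗ₜ[k] b) x = TensorProduct.map (Lmap k A M a) (Lmap k A M b) x := by
  simp [beta]

lemma beta_add (x y : A ⊗[k] A) :
    beta (M := M) (x + y) = beta x + beta y := by
  simp [beta, map_add]

lemma beta_zero : beta (M := M) (0 : A ⊗[k] A) = 0 := by
  simp [beta]

lemma R12_add (f g : M ⊗[k] M →ₗ[k] M ⊗[k] M) : R12 (f + g) = R12 f + R12 g := by
  simp [R12, TensorProduct.map_add_left, LinearMap.add_comp, LinearMap.comp_add]

lemma R12_zero : R12 (0 : M ⊗[k] M →ₗ[k] M ⊗[k] M) = 0 := by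
  simp [R12]

lemma R13_add (f g : M ⊗[k] M →ₗ[k] M ⊗[k] M) : R13 (f + g) = R13 f + R13 g := by
  simp [R13, R12_add, LinearMap.add_comp, LinearMap.comp_add]

lemma R13_zero : R13 (0 : M ⊗[k] M →ₗ[k] M ⊗[k] M) = 0 := by
  simp [R13, R12_zero]

lemma R23_add (f g : M ⊗[k] M →ₗ[k] M ⊗[k] M) : R23 (f + g) = R23 f + R23 g := by
  simp [R23, TensorProduct.map_add_right]

lemma R23_zero : R23 (0 : M ⊗[k] M →ₗ[k] M ⊗[k] M) = 0 := by
  simp [R23]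

lemma beta_mulRight (c : A) (r : A ⊗[k] A) (m n : M) :
    beta (M := M) (TensorProduct.map (LinearMap.mulRight k c) LinearMap.id r)
      (m ⊗ₜ[k] n) = beta r ((c • m) ⊗ₜ[k] n) := by
  induction r using TensorProduct.induction_on with
  | zero => simp [beta_zero]
  | tmul a b => simp [beta_tmul, mul_smul]
  | add x y hx hy => simp only [map_add, beta_add, LinearMap.add_apply, hx, hy]

lemma beta_mulLeft (c : A) (r : A ⊗[k] A) (m n : M) :
    beta (M := M) (TensorProduct.map (LinearMap.mulLeft k c) LinearMap.id r)
      (m ⊗ₜ[k] n)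
      = TensorProduct.map (Lmap k A M c) LinearMap.id (beta r (m ⊗ₜ[k] n)) := by
  induction r using TensorProduct.induction_on with
  | zero => simp [beta_zero]
  | tmul a b => simp [beta_tmul, mul_smul]
  | add x y hx hy => simp only [map_add, beta_add, LinearMap.add_apply, hx, hy]

/-- Key identity: acting by `c` on the first factor before applying `beta r`
equals acting afterwards, thanks to the hypothesis `hr`. -/
lemma beta_smul_left (r : A ⊗[k] A)
    (hr : ∀ a : A,
      TensorProduct.map (LinearMap.mulRight k a) LinearMap.id r =
      TensorProduct.map (LinearMap.mulLeft k a) LinearMap.id r)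
    (c : A) (m n : M) :
    beta r ((c • m) ⊗ₜ[k] n)
      = TensorProduct.map (Lmap k A M c) LinearMap.id (beta r (m ⊗ₜ[k] n)) := by
  rw [← beta_mulRight, hr c, beta_mulLeft]

lemma R12_beta_tmul (a b : A) :
    R12 (beta (M := M) (a ⊗ₜ[k] b))
      = TensorProduct.map (Lmap k A M a) (TensorProduct.map (Lmap k A M b) LinearMap.id) := by
  apply TensorProduct.ext
  apply LinearMap.ext; intro m
  apply TensorProduct.ext'
  intro n p
  simp [R12, beta_tmul]

lemma R13_beta_tmul (a b : A) :
    R13 (beta (M := M) (a ⊗ₜ[k] b))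
      = TensorProduct.map (Lmap k A M a) (TensorProduct.map LinearMap.id (Lmap k A M b)) := by
  apply TensorProduct.ext
  apply LinearMap.ext; intro m
  apply TensorProduct.ext'
  intro n p
  simp [R13, R12, tau, beta_tmul]

lemma R12_apply_tmul (f : M ⊗[k] M →ₗ[k] M ⊗[k] M) (x y z : M) :
    R12 f (x ⊗ₜ[k] (y ⊗ₜ[k] z))
      = (TensorProduct.assoc k M M M) ((f (x ⊗ₜ[k] y)) ⊗ₜ[k] z) := by
  simp [R12]

theorem long_eq_aux1 (r r₂ : A ⊗[k] A)
    (hr : ∀ a : A,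
      TensorProduct.map (LinearMap.mulRight k a) LinearMap.id r =
      TensorProduct.map (LinearMap.mulLeft k a) LinearMap.id r) :
    R12 (beta (M := M) r) ∘ₗ R13 (beta (M := M) r₂)
      = R13 (beta (M := M) r₂) ∘ₗ R12 (beta (M := M) r) := by
  induction r₂ using TensorProduct.induction_on with
  | zero => simp [beta_zero, R13_zero]
  | add x y hx hy =>
      simp only [beta_add, R13_add, LinearMap.add_comp, LinearMap.comp_add, hx, hy]
  | tmul c d =>
      rw [R13_beta_tmul]
      apply TensorProduct.ext
      apply LinearMap.ext; intro m
      apply TensorProduct.ext'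
      intro n p
      simp only [LinearMap.compr₂_apply, LinearMap.compr₂ₛₗ_apply, TensorProduct.mk_apply, LinearMap.comp_apply,
        TensorProduct.map_tmul, LinearMap.id_coe, id_eq, Lmap_apply]
      rw [R12_apply_tmul, R12_apply_tmul, beta_smul_left r hr c m n]
      generalize beta (M := M) r (m ⊗ₜ[k] n) = X
      induction X using TensorProduct.induction_on with
      | zero => simp
      | tmul x y => simp
      | add u v hu hv =>
          simp only [map_add, TensorProduct.add_tmul]
          rw [hu, hv]

theorem long_eq_aux2 (r r₂ : A ⊗[k] A)
    (hr : ∀ a : A,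
      TensorProduct.map (LinearMap.mulRight k a) LinearMap.id r =
      TensorProduct.map (LinearMap.mulLeft k a) LinearMap.id r) :
    R12 (beta (M := M) r₂) ∘ₗ R23 (beta (M := M) r)
      = R23 (beta (M := M) r) ∘ₗ R12 (beta (M := M) r₂) := by
  induction r₂ using TensorProduct.induction_on with
  | zero => simp [beta_zero, R12_zero]
  | add x y hx hy =>
      simp only [beta_add, R12_add, LinearMap.add_comp, LinearMap.comp_add, hx, hy]
  | tmul a b =>
      rw [R12_beta_tmul]
      apply TensorProduct.ext
      apply LinearMap.ext; intro m
      apply TensorProduct.ext'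
      intro n p
      simp only [LinearMap.compr₂_apply, LinearMap.compr₂ₛₗ_apply, TensorProduct.mk_apply, LinearMap.comp_apply,
        R23, TensorProduct.map_tmul, LinearMap.id_coe, id_eq, Lmap_apply]
      rw [beta_smul_left r hr b n p]

end Aux

theorem long_equation_homothety
    {k : Type*} [Field k] {A : Type*} [Ring A] [Algebra k A]
    {M : Type*} [AddCommGroup M] [Module k M] [Module A M]
    [IsScalarTower k A M] [SMulCommClass A k M]
    (r : A ⊗[k] A)
    (hr : ∀ a : A,
      TensorProduct.map (LinearMap.mulRight k a) LinearMap.id r =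
      TensorProduct.map (LinearMap.mulLeft k a) LinearMap.id r) :
    IsLongSolution
      (TensorProduct.homTensorHomMap (RingHom.id k) M M M M
        (TensorProduct.map (Algebra.lsmul k k M).toLinearMap
          (Algebra.lsmul k k M).toLinearMap r)) := by
  constructor
  · exact long_eq_aux1 r r hr
  · exact long_eq_aux2 r r hr
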